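/- Let G be a finite simple graph and x a leaf of G (a vertex of degree one) with unique neighbor y. Then for every integer s ≥ 1, the colon ideal satisfies (I(G)^{(s)} : xy) = I(G)^{(s−1)} (where I(G)^{(0)} is understood to be the whole polynomial ring S). -/

import Mathlib

open MvPolynomial

/-! ### Symbolic powers -/

/-- The `s`-th symbolic power of an ideal `I`:
`I^{(s)} = ⋂_{p ∈ Min(I)} Ker(R → (R/I^s)_p)`. -/
noncomputable def symbolicPower {R : Type} [CommRing R] (I : Ideal R) (s : ℕ) : Ideal R :=
  ⨅ p : {p : Ideal R // p ∈ I.minimalPrimes},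
    haveI : p.1.IsPrime := p.2.1.1
    RingHom.ker ((algebraMap (R ⧸ I ^ s)
        (Localization (Submonoid.map (Ideal.Quotient.mk (I ^ s)) p.1.primeCompl))).comp
      (Ideal.Quotient.mk (I ^ s)))

/-! ### Edge ideals and graph notions -/

/-- The edge ideal of a graph on vertex set `Fin n`, inside `K[x_1, …, x_n]`. -/
noncomputable def edgeIdeal (K : Type) [Field K] {n : ℕ} (G : SimpleGraph (Fin n)) :
    Ideal (MvPolynomial (Fin n) K) :=
  Ideal.span {m | ∃ i j : Fin n, G.Adj i j ∧ m = X i * X j}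

/-- The edge sets of cycles of `G`. -/
def cycleEdgeSets {V : Type} (G : SimpleGraph V) : Set (Set (Sym2 V)) :=
  {E' | ∃ (v : V) (w : G.Walk v v), w.IsCycle ∧ E' = {e | e ∈ w.edges}}

/-- A graph is unicyclic if it contains exactly one cycle as a subgraph. -/
def IsUnicyclic {V : Type} (G : SimpleGraph V) : Prop :=
  ∃! E', E' ∈ cycleEdgeSets G

/-- The graph `G \ U`: delete the vertices of `U` and all edges meeting `U`. -/
def deleteVertices {V : Type} (G : SimpleGraph V) (U : Set V) : SimpleGraph V where
  Adj a b := G.Adj a b ∧ a ∉ U ∧ b ∉ U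
  symm := ⟨fun _ _ ⟨h, ha, hb⟩ => ⟨h.symm, hb, ha⟩⟩
  loopless := ⟨fun a ⟨h, _, _⟩ => G.loopless.irrefl a h⟩

/-- The distance `d_G(x, W)` from a vertex to a set of vertices. -/
noncomputable def distToSet {V : Type} (G : SimpleGraph V) (x : V) (W : Set V) : ℕ :=
  sInf (G.dist x '' W)

/-- `x` is a leaf of `G`, i.e. a vertex of degree one. -/
def IsLeaf {V : Type} (G : SimpleGraph V) (x : V) : Prop :=
  ∃ y, G.neighborSet x = {y}

/-- `M` is an induced matching of `G`: a set of pairwise disjoint edges such that no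
edge of `E(G) \ M` is contained in the union of two edges of `M`. -/
def IsInducedMatching {V : Type} (G : SimpleGraph V) (M : Set (Sym2 V)) : Prop :=
  M ⊆ G.edgeSet ∧
  (∀ e ∈ M, ∀ f ∈ M, e ≠ f → ∀ v : V, ¬(v ∈ e ∧ v ∈ f)) ∧
  (∀ g ∈ G.edgeSet, g ∉ M → ∀ e ∈ M, ∀ f ∈ M, ¬(∀ v : V, v ∈ g → v ∈ e ∨ v ∈ f))

/-- The induced matching number `ν(G)`. -/
noncomputable def inducedMatchingNumber {V : Type} (G : SimpleGraph V) : ℕ :=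
  sSup {k : ℕ | ∃ M : Set (Sym2 V), IsInducedMatching G M ∧ M.ncard = k}

/-- `A` is a vertex cover of `G`. -/
def IsVertexCover {V : Type} (G : SimpleGraph V) (A : Set V) : Prop :=
  ∀ ⦃u v : V⦄, G.Adj u v → u ∈ A ∨ v ∈ A

/-- `A` is a minimal vertex cover of `G`. -/
def IsMinimalVertexCover {V : Type} (G : SimpleGraph V) (A : Set V) : Prop :=
  IsVertexCover G A ∧ ∀ B ⊂ A, ¬ IsVertexCover G B

/-! ### Castelnuovo–Mumford regularity -/

/-- An element `f` of a twisted graded free module `⊕_{e : σ} S(-deg e)` over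
`S = K[x_1, …, x_n]` is homogeneous of degree `d` iff each component `f e` is a
homogeneous polynomial of degree `d - deg e`. -/
def IsHomogElem {K : Type} [Field K] {n : ℕ} {σ : Type} (deg : σ → ℕ)
    (f : σ →₀ MvPolynomial (Fin n) K) (d : ℕ) : Prop :=
  ∀ e : σ, if deg e ≤ d then f e ∈ homogeneousSubmodule (Fin n) K (d - deg e) else f e = 0

/-- A graded free resolution of an ideal `I ⊆ S = K[x_1, …, x_n]` by finitely generated
twisted graded free modules `F i = ⊕_{e : σ i} S(-deg i e)`, with degree-preserving
differentials, exact, and with augmentation onto `I`. -/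
structure GradedFreeResolution (K : Type) [Field K] (n : ℕ)
    (I : Ideal (MvPolynomial (Fin n) K)) where
  σ : ℕ → Type
  fin : ∀ i, Fintype (σ i)
  deg : ∀ i, σ i → ℕ
  aug : (σ 0 →₀ MvPolynomial (Fin n) K) →ₗ[MvPolynomial (Fin n) K] MvPolynomial (Fin n) K
  d : ∀ i, (σ (i + 1) →₀ MvPolynomial (Fin n) K) →ₗ[MvPolynomial (Fin n) K]
        (σ i →₀ MvPolynomial (Fin n) K)
  aug_range : LinearMap.range aug = I
  exact_zero : LinearMap.ker aug = LinearMap.range (d 0)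
  exact : ∀ i, LinearMap.ker (d i) = LinearMap.range (d (i + 1))
  aug_graded : ∀ (dd : ℕ) (f : σ 0 →₀ MvPolynomial (Fin n) K),
    IsHomogElem (deg 0) f dd → aug f ∈ homogeneousSubmodule (Fin n) K dd
  d_graded : ∀ (i : ℕ) (dd : ℕ) (f : σ (i + 1) →₀ MvPolynomial (Fin n) K),
    IsHomogElem (deg (i + 1)) f dd → IsHomogElem (deg i) (d i f) dd

/-- The Castelnuovo–Mumford regularity of a homogeneous ideal `I ⊆ K[x_1, …, x_n]`:
the least `r` such that `I` admits a graded free resolution whose `i`-th term is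
generated in degrees `≤ r + i`.  (For finitely generated graded modules this agrees
with the usual definition `max{j - i : β_{i,j} ≠ 0}` via the minimal free resolution.) -/
noncomputable def reg (K : Type) [Field K] (n : ℕ) (I : Ideal (MvPolynomial (Fin n) K)) : ℕ :=
  sInf {r : ℕ | ∃ F : GradedFreeResolution K n I, ∀ (i : ℕ) (e : F.σ i), F.deg i e ≤ r + i}

/-! ### Auxiliary lemmas for the proof -/

lemma mem_symbolicPower_iff {R : Type} [CommRing R] (I : Ideal R) (s : ℕ) (r : R) :
    r ∈ symbolicPower I s ↔ ∀ p ∈ I.minimalPrimes, ∃ u ∉ p, u * r ∈ I ^ s := by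
  rw [symbolicPower, Submodule.mem_iInf]
  constructor
  · intro h p hp
    have hmem := h ⟨p, hp⟩
    haveI : p.IsPrime := hp.1.1
    rw [RingHom.mem_ker, RingHom.comp_apply,
      IsLocalization.map_eq_zero_iff (Submonoid.map (Ideal.Quotient.mk (I ^ s)) p.primeCompl)]
      at hmem
    obtain ⟨⟨_, u, hu, rfl⟩, hm⟩ := hmem
    refine ⟨u, hu, ?_⟩
    rw [← map_mul] at hm
    exact Ideal.Quotient.eq_zero_iff_mem.mp hm
  · rintro h ⟨p, hp⟩
    haveI : p.IsPrime := hp.1.1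
    obtain ⟨u, hu, hur⟩ := h p hp
    rw [RingHom.mem_ker, RingHom.comp_apply,
      IsLocalization.map_eq_zero_iff (Submonoid.map (Ideal.Quotient.mk (I ^ s)) p.primeCompl)]
    refine ⟨⟨Ideal.Quotient.mk (I ^ s) u, u, hu, rfl⟩, ?_⟩
    rw [← map_mul]
    exact Ideal.Quotient.eq_zero_iff_mem.mpr hur

namespace SPaux


variable {K : Type} [Field K] {n : ℕ}

/-- substitution killing the variables in `A` -/
noncomputable def phi (A : Finset (Fin n)) :
    MvPolynomial (Fin n) K →ₐ[K] MvPolynomial (Fin n) K :=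
  aeval (fun i => if i ∈ A then 0 else X i)

lemma ker_phi (A : Finset (Fin n)) :
    RingHom.ker (phi (K := K) A).toRingHom = Ideal.span (X '' (↑A : Set (Fin n))) := by
  apply le_antisymm
  · intro f hf
    have key : ∀ g : MvPolynomial (Fin n) K,
        g - phi (K := K) A g ∈ Ideal.span (X '' (↑A : Set (Fin n))) := by
      intro g
      induction g using MvPolynomial.induction_on with
      | C a => simp [phi]
      | add f g hf hg => simpa [add_sub_add_comm] using Ideal.add_mem _ hf hg
      | mul_X f i hf =>
        have h1 : f * X i - phi (K := K) A f * phi (K := K) A (X i)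
            = (f - phi (K := K) A f) * X i
              + phi (K := K) A f * (X i - phi (K := K) A (X i)) := by ring
        rw [map_mul, h1]
        refine Ideal.add_mem _ (Ideal.mul_mem_right _ _ hf) (Ideal.mul_mem_left _ _ ?_)
        by_cases hi : i ∈ A
        · rw [show phi (K := K) A (X i) = 0 by simp [phi, hi], sub_zero]
          exact Ideal.subset_span ⟨i, by simpa using hi, rfl⟩
        · rw [show phi (K := K) A (X i) = X i by simp [phi, hi], sub_self]
          exact Ideal.zero_mem _
    have hf0 : phi (K := K) A f = 0 := hf
    simpa [hf0] using key f
  · rw [Ideal.span_le]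
    rintro _ ⟨i, hi, rfl⟩
    have : phi (K := K) A (X i) = 0 := by simp [phi, Finset.mem_coe.mp hi]
    simpa [RingHom.mem_ker] using this

lemma spanX_isPrime (A : Finset (Fin n)) :
    (Ideal.span (X '' (↑A : Set (Fin n)) : Set (MvPolynomial (Fin n) K))).IsPrime := by
  rw [← ker_phi (K := K) A]; exact RingHom.ker_isPrime _

lemma X_mem_spanX {A : Finset (Fin n)} {i : Fin n} :
    (X i : MvPolynomial (Fin n) K) ∈ Ideal.span (X '' (↑A : Set (Fin n))) ↔ i ∈ A := by
  constructor
  · intro h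
    by_contra hi
    rw [← ker_phi (K := K) A] at h
    have : phi (K := K) A (X i) = 0 := h
    simp [phi, hi, X_ne_zero] at this
  · intro h
    exact Ideal.subset_span ⟨i, by simpa using h, rfl⟩




def wt (A : Finset (Fin n)) (d : Fin n →₀ ℕ) : ℕ := ∑ a ∈ A, d a

lemma wt_add (A : Finset (Fin n)) (d e : Fin n →₀ ℕ) : wt A (d + e) = wt A d + wt A e := by
  simp [wt, Finset.sum_add_distrib]

lemma wt_single (A : Finset (Fin n)) (i : Fin n) (k : ℕ) :
    wt A (Finsupp.single i k) = if i ∈ A then k else 0 := by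
  simp [wt, Finsupp.single_apply, Finset.sum_ite_eq]

def wtIdeal (A : Finset (Fin n)) (t : ℕ) : Ideal (MvPolynomial (Fin n) K) where
  carrier := {f | ∀ d ∈ f.support, t ≤ wt A d}
  zero_mem' := by simp
  add_mem' := by
    intro f g hf hg d hd
    rcases Finset.mem_union.mp (MvPolynomial.support_add hd) with h | h
    exacts [hf d h, hg d h]
  smul_mem' := by
    intro c f hf d hd
    rw [smul_eq_mul] at hd
    rcases Finset.mem_add.mp (MvPolynomial.support_mul c f hd) with ⟨a, _, b, hb, rfl⟩
    have := hf b hb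
    rw [wt_add]; omega

lemma mem_wtIdeal {A : Finset (Fin n)} {t : ℕ} {f : MvPolynomial (Fin n) K} :
    f ∈ wtIdeal A t ↔ ∀ d ∈ f.support, t ≤ wt A d := Iff.rfl

lemma spanX_le_wtIdeal_one (A : Finset (Fin n)) :
    Ideal.span (X '' (↑A : Set (Fin n)) : Set (MvPolynomial (Fin n) K)) ≤ wtIdeal A 1 := by
  rw [Ideal.span_le]
  rintro _ ⟨i, hi, rfl⟩ d hd
  rw [MvPolynomial.support_X, Finset.mem_singleton] at hd
  subst hd
  simp [wt_single, Finset.mem_coe.mp hi]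

lemma spanX_pow_le (A : Finset (Fin n)) (t : ℕ) :
    (Ideal.span (X '' (↑A : Set (Fin n)) : Set (MvPolynomial (Fin n) K))) ^ t ≤ wtIdeal A t := by
  induction t with
  | zero => intro f _ d _; simp
  | succ t ih =>
    rw [pow_succ]
    refine Ideal.mul_le.mpr (fun f hf g hg => ?_)
    intro d hd
    rcases Finset.mem_add.mp (MvPolynomial.support_mul f g hd) with ⟨a, ha, b, hb, rfl⟩
    have h1 := ih hf a ha
    have h2 := spanX_le_wtIdeal_one A hg b hb
    rw [wt_add]; omega

lemma monomial_mem_pow (A : Finset (Fin n)) :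
    ∀ (t : ℕ) (d : Fin n →₀ ℕ) (c : K), t ≤ wt A d →
      monomial d c ∈ (Ideal.span (X '' (↑A : Set (Fin n)) : Set (MvPolynomial (Fin n) K))) ^ t := by
  intro t
  induction t with
  | zero => intro d c _; simp
  | succ t ih =>
    intro d c hw
    obtain ⟨a, ha, hda⟩ : ∃ a ∈ A, d a ≠ 0 := by
      by_contra h
      push_neg at h
      have : wt A d = 0 := Finset.sum_eq_zero (fun a ha => h a ha)
      omega
    have hdd : (d - Finsupp.single a 1) + Finsupp.single a 1 = d := by
      ext j
      rcases eq_or_ne a j with rfl | hne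
      · simp [Finsupp.single_apply]
        omega
      · simp [Finsupp.single_apply, hne]
    have hw' : t ≤ wt A (d - Finsupp.single a 1) := by
      have h2 : wt A d = wt A (d - Finsupp.single a 1) + 1 := by
        conv_lhs => rw [← hdd]
        rw [wt_add, wt_single]
        simp [ha]
      omega
    have heq : monomial d c = monomial (d - Finsupp.single a 1) c * X a := by
      rw [X, monomial_mul, hdd, mul_one]
    rw [heq, pow_succ]
    exact Ideal.mul_mem_mul (ih _ c hw') (Ideal.subset_span ⟨a, by simpa using ha, rfl⟩)

lemma wtIdeal_le_pow (A : Finset (Fin n)) (t : ℕ) :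
    wtIdeal A t ≤ (Ideal.span (X '' (↑A : Set (Fin n)) : Set (MvPolynomial (Fin n) K))) ^ t := by
  intro f hf
  rw [← support_sum_monomial_coeff f]
  exact Ideal.sum_mem _ (fun d hd => monomial_mem_pow A t d _ (hf d hd))

lemma mul_monomial_mem (I : Ideal (MvPolynomial (Fin n) K)) (A : Finset (Fin n))
    (m : Fin n → MvPolynomial (Fin n) K) (hm : ∀ a ∈ A, m a * X a ∈ I) :
    ∀ (t : ℕ) (d : Fin n →₀ ℕ) (c : K), t ≤ wt A d →
      (∏ a ∈ A, (m a) ^ t) * monomial d c ∈ I ^ t := by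
  intro t
  induction t with
  | zero => intro d c _; simp
  | succ t ih =>
    intro d c hw
    obtain ⟨a, ha, hda⟩ : ∃ a ∈ A, d a ≠ 0 := by
      by_contra h
      push_neg at h
      have : wt A d = 0 := Finset.sum_eq_zero (fun a ha => h a ha)
      omega
    have hdd : (d - Finsupp.single a 1) + Finsupp.single a 1 = d := by
      ext j
      rcases eq_or_ne a j with rfl | hne
      · simp [Finsupp.single_apply]
        omega
      · simp [Finsupp.single_apply, hne]
    have hw' : t ≤ wt A (d - Finsupp.single a 1) := by
      have h2 : wt A d = wt A (d - Finsupp.single a 1) + 1 := by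
        conv_lhs => rw [← hdd]
        rw [wt_add, wt_single]
        simp [ha]
      omega
    have heq : monomial d c = monomial (d - Finsupp.single a 1) c * X a := by
      rw [X, monomial_mul, hdd, mul_one]
    have e1 : ∏ a' ∈ A, (m a') ^ (t + 1) = (∏ a' ∈ A, m a') * ∏ a' ∈ A, (m a') ^ t := by
      rw [← Finset.prod_mul_distrib]
      exact Finset.prod_congr rfl (fun _ _ => pow_succ' _ _)
    have e2 : ∏ a' ∈ A, m a' = m a * ∏ a' ∈ A.erase a, m a' :=
      (Finset.mul_prod_erase A m ha).symm
    have key : (∏ a' ∈ A, (m a') ^ (t + 1)) * monomial d c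
        = (m a * X a) * ((∏ a' ∈ A.erase a, m a')
            * ((∏ a' ∈ A, (m a') ^ t) * monomial (d - Finsupp.single a 1) c)) := by
      rw [e1, e2, heq]; ring
    rw [key, pow_succ']
    exact Ideal.mul_mem_mul (hm a ha) (Ideal.mul_mem_left _ _ (ih _ c hw'))

lemma mul_mem_pow_of_wt (I : Ideal (MvPolynomial (Fin n) K)) (A : Finset (Fin n))
    (m : Fin n → MvPolynomial (Fin n) K) (hm : ∀ a ∈ A, m a * X a ∈ I) (t : ℕ)
    (f : MvPolynomial (Fin n) K) (hf : f ∈ wtIdeal A t) :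
    (∏ a ∈ A, (m a) ^ t) * f ∈ I ^ t := by
  rw [show (∏ a ∈ A, m a ^ t) * f
      = ∑ d ∈ f.support, (∏ a ∈ A, m a ^ t) * monomial d (coeff d f) by
    rw [← Finset.mul_sum, support_sum_monomial_coeff]]
  exact Ideal.sum_mem _ (fun d hd => mul_monomial_mem I A m hm t d _ (hf d hd))


lemma keystep {K : Type} [Field K] {n : ℕ} (G : SimpleGraph (Fin n)) (x y : Fin n)
    (hleaf : G.neighborSet x = {y}) (s : ℕ) (hs : 1 ≤ s)
    (p : Ideal (MvPolynomial (Fin n) K)) (hp : p ∈ (edgeIdeal K G).minimalPrimes)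
    (r : MvPolynomial (Fin n) K) :
    (∃ u ∉ p, u * (r * (X x * X y)) ∈ (edgeIdeal K G) ^ s) ↔
      ∃ u ∉ p, u * r ∈ (edgeIdeal K G) ^ (s - 1) := by
  classical
  obtain ⟨s', rfl⟩ : ∃ s', s = s' + 1 := ⟨s - 1, (Nat.succ_pred_eq_of_pos hs).symm⟩
  simp only [Nat.add_sub_cancel]
  haveI hpp : p.IsPrime := hp.1.1
  have hIp : edgeIdeal K G ≤ p := hp.1.2
  have hadj : G.Adj x y := by
    have : y ∈ G.neighborSet x := by rw [hleaf]; exact rfl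
    exact this
  have hleafadj : ∀ j : Fin n, G.Adj x j → j = y := by
    intro j hj
    have : j ∈ G.neighborSet x := hj
    rw [hleaf] at this
    exact this
  have hxyI : (X x * X y : MvPolynomial (Fin n) K) ∈ edgeIdeal K G :=
    Ideal.subset_span ⟨x, y, hadj, rfl⟩
  set A : Finset (Fin n) := Finset.univ.filter (fun i => X i ∈ p) with hA
  have memA : ∀ i : Fin n, i ∈ A ↔ X i ∈ p := by intro i; simp [hA]
  have hcover : ∀ i j : Fin n, G.Adj i j → i ∈ A ∨ j ∈ A := by
    intro i j hij
    have : (X i * X j : MvPolynomial (Fin n) K) ∈ p :=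
      hIp (Ideal.subset_span ⟨i, j, hij, rfl⟩)
    rcases hpp.mem_or_mem this with h | h
    exacts [Or.inl ((memA i).mpr h), Or.inr ((memA j).mpr h)]
  have hspan : ∀ B : Finset (Fin n), (∀ i j : Fin n, G.Adj i j → i ∈ B ∨ j ∈ B) →
      edgeIdeal K G ≤ Ideal.span (X '' (↑B : Set (Fin n))) := by
    intro B hB
    rw [edgeIdeal, Ideal.span_le]
    rintro _ ⟨i, j, hij, rfl⟩
    rcases hB i j hij with h | h
    · exact Ideal.mul_mem_right _ _ (Ideal.subset_span ⟨i, by simpa using h, rfl⟩)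
    · exact Ideal.mul_mem_left _ _ (Ideal.subset_span ⟨j, by simpa using h, rfl⟩)
  have hq_le_p : Ideal.span (X '' (↑A : Set (Fin n))) ≤ p := by
    rw [Ideal.span_le]
    rintro _ ⟨i, hi, rfl⟩
    exact (memA i).mp (Finset.mem_coe.mp hi)
  have hmin : ∀ B : Finset (Fin n), (∀ i j : Fin n, G.Adj i j → i ∈ B ∨ j ∈ B) →
      (↑B : Set (Fin n)) ⊆ ↑A → ∀ i ∈ A, i ∈ B := by
    intro B hB hBA i hi
    have h1 : Ideal.span (X '' (↑B : Set (Fin n))) ≤ p :=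
      le_trans (Ideal.span_mono (Set.image_mono hBA)) hq_le_p
    have h2 : p ≤ Ideal.span (X '' (↑B : Set (Fin n))) :=
      hp.2 ⟨spanX_isPrime B, hspan B hB⟩ h1
    exact X_mem_spanX.mp (h2 ((memA i).mp hi))
  have hxory : x ∈ A ∨ y ∈ A := hcover x y hadj
  have hnotboth : ¬(x ∈ A ∧ y ∈ A) := by
    rintro ⟨hxA, hyA⟩
    have hcov' : ∀ i j : Fin n, G.Adj i j → i ∈ A.erase x ∨ j ∈ A.erase x := by
      intro i j hij
      rcases eq_or_ne i x with rfl | hix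
      · have hjy : j = y := hleafadj j hij
        subst hjy
        exact Or.inr (Finset.mem_erase.mpr ⟨hadj.ne', hyA⟩)
      rcases eq_or_ne j x with rfl | hjx
      · have hiy : i = y := hleafadj i hij.symm
        subst hiy
        exact Or.inl (Finset.mem_erase.mpr ⟨hadj.ne', hyA⟩)
      rcases hcover i j hij with h | h
      exacts [Or.inl (Finset.mem_erase.mpr ⟨hix, h⟩),
        Or.inr (Finset.mem_erase.mpr ⟨hjx, h⟩)]
    have := hmin (A.erase x) hcov' (by simp [Finset.erase_subset]) x hxA
    simp at this
  have hone : wt A (Finsupp.single x 1 + Finsupp.single y 1) = 1 := by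
    rw [wt_add, wt_single, wt_single]
    rcases hxory with h | h
    · rw [if_pos h, if_neg (fun h' => hnotboth ⟨h, h'⟩)]
    · rw [if_neg (fun h' => hnotboth ⟨h', h⟩), if_pos h]
  have hnb0 : ∀ a ∈ A, ∃ j, j ∉ A ∧ G.Adj a j := by
    intro a ha
    by_contra hcon
    push_neg at hcon
    have hcov' : ∀ i j : Fin n, G.Adj i j → i ∈ A.erase a ∨ j ∈ A.erase a := by
      intro i j hij
      rcases eq_or_ne i a with rfl | hia
      · have hjA : j ∈ A := by
          by_contra hj
          exact (hcon j hj) hij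
        exact Or.inr (Finset.mem_erase.mpr ⟨fun h => hij.ne h.symm, hjA⟩)
      rcases eq_or_ne j a with rfl | hja
      · have hiA : i ∈ A := by
          by_contra hi
          exact (hcon i hi) hij.symm
        exact Or.inl (Finset.mem_erase.mpr ⟨hia, hiA⟩)
      rcases hcover i j hij with h | h
      exacts [Or.inl (Finset.mem_erase.mpr ⟨hia, h⟩),
        Or.inr (Finset.mem_erase.mpr ⟨hja, h⟩)]
    have := hmin (A.erase a) hcov' (by simp [Finset.erase_subset]) a ha
    simp at this
  have hnb : ∀ a : Fin n, ∃ j : Fin n, a ∈ A → (j ∉ A ∧ G.Adj a j) := by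
    intro a
    by_cases ha : a ∈ A
    · obtain ⟨j, hj⟩ := hnb0 a ha
      exact ⟨j, fun _ => hj⟩
    · exact ⟨x, fun h => absurd h ha⟩
  choose jf hjf using hnb
  have hmJ : ∀ a ∈ A, (X (jf a) : MvPolynomial (Fin n) K) * X a ∈ edgeIdeal K G :=
    fun a ha => Ideal.subset_span ⟨jf a, a, ((hjf a ha).2).symm, rfl⟩
  constructor
  · rintro ⟨u, hu, hmem⟩
    have hmem' : u * r * (X x * X y) ∈ (edgeIdeal K G) ^ (s' + 1) := by
      rw [mul_assoc]; exact hmem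
    have hIn : u * r * (X x * X y)
        ∈ (Ideal.span (X '' (↑A : Set (Fin n)))) ^ (s' + 1) :=
      Ideal.pow_right_mono (hspan A hcover) (s' + 1) hmem'
    have hwtur : u * r ∈ wtIdeal A s' := by
      intro d hd
      have hXY : (X x * X y : MvPolynomial (Fin n) K)
          = monomial (Finsupp.single x 1 + Finsupp.single y 1) 1 := by
        rw [X, X, monomial_mul, mul_one]
      have hd' : d + (Finsupp.single x 1 + Finsupp.single y 1)
          ∈ (u * r * (X x * X y)).support := by
        rw [MvPolynomial.mem_support_iff] at hd ⊢
        rw [hXY, MvPolynomial.coeff_mul_monomial]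
        simpa using hd
      have hws := spanX_pow_le A (s' + 1) hIn _ hd'
      rw [wt_add, hone] at hws
      omega
    refine ⟨(∏ a ∈ A, (X (jf a) : MvPolynomial (Fin n) K) ^ s') * u, ?_, ?_⟩
    · have hcompl : (∏ a ∈ A, (X (jf a) : MvPolynomial (Fin n) K) ^ s') * u
          ∈ p.primeCompl :=
        Submonoid.mul_mem _
          (Submonoid.prod_mem _ (fun a ha => Submonoid.pow_mem _
            (show (X (jf a) : MvPolynomial (Fin n) K) ∉ p from
              fun hXp => (hjf a ha).1 ((memA _).mpr hXp)) s')) hu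
      exact hcompl
    · rw [mul_assoc]
      exact mul_mem_pow_of_wt (edgeIdeal K G) A (fun a => X (jf a)) hmJ s' (u * r) hwtur
  · rintro ⟨u, hu, hmem⟩
    refine ⟨u, hu, ?_⟩
    have hre : u * (r * (X x * X y)) = u * r * (X x * X y) := by ring
    rw [hre, pow_succ]
    exact Ideal.mul_mem_mul hmem hxyI

end SPaux

/-- Let `x` be a leaf of `G` with unique neighbor `y`.  Then for every
`s ≥ 1`, `(I(G)^{(s)} : xy) = I(G)^{(s−1)}` (with `I(G)^{(0)} = S`). -/
theorem symbolicPower_colon_leafEdge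
    {K : Type} [Field K] {n : ℕ} (G : SimpleGraph (Fin n)) (x y : Fin n)
    (hleaf : G.neighborSet x = {y}) (s : ℕ) (hs : 1 ≤ s) :
    Submodule.colon (symbolicPower (edgeIdeal K G) s)
        (Ideal.span {(X x * X y : MvPolynomial (Fin n) K)}) =
      symbolicPower (edgeIdeal K G) (s - 1) := by
  ext r
  rw [show (Ideal.span {(X x * X y : MvPolynomial (Fin n) K)})
      = Submodule.span (MvPolynomial (Fin n) K) {(X x * X y : MvPolynomial (Fin n) K)} from rfl,
    Submodule.mem_colon_span_singleton, smul_eq_mul, mem_symbolicPower_iff, mem_symbolicPower_iff]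
  exact forall₂_congr (fun p hp => SPaux.keystep G x y hleaf s hs p hp r)
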